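/- For two agents with symmetric additive valuations with externalities (i.e., V_1(1,a)=V_2(2,a) and V_1(2,a)=V_2(1,a) for every item a), the greedy procedure that allocates items in decreasing order of |V_1(1,a)-V_1(2,a)|, always giving the current item according to the preference of the agent with the smaller current total value, produces an allocation in which at most one agent envies the other, and any envy is eliminated by removing a single suitable item. -/

import Mathlib

noncomputable section

/-- Partial allocations between two agents (`true` = agent 1, `false` = agent 2) are
represented as lists of (item, owner) pairs.  `listVal V i L` is the value agent `i`
derives from the partial allocation `L`, with externalities
(`V i j a` = value `i` gets when item `a` goes to agent `j`). -/
def listVal {α : Type*} (V : Bool → Bool → α → ℝ) (i : Bool) (L : List (α × Bool)) : ℝ :=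
  (L.map fun p => V i p.2 p.1).sum

/-- The value agent `i` derives from the allocation obtained from `L` by swapping
the two agents' bundles. -/
def swapVal {α : Type*} (V : Bool → Bool → α → ℝ) (i : Bool) (L : List (α × Bool)) : ℝ :=
  (L.map fun p => V i (!p.2) p.1).sum

/-- One step of the greedy procedure: the agent with the smaller current total value
decides which of the two agents receives the next item `a`, according to her own
preference (ties broken in favour of agent 1 / of giving the item to agent 1). -/
def greedyStep {α : Type*} (V : Bool → Bool → α → ℝ) (L : List (α × Bool)) (a : α) :
    List (α × Bool) :=
  let poor : Bool := if listVal V true L ≤ listVal V false L then true else false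
  let owner : Bool := if V poor false a ≤ V poor true a then true else false
  (a, owner) :: L

/-- The greedy procedure run on the list of items `l`. -/
def greedy {α : Type*} (V : Bool → Bool → α → ℝ) (l : List α) : List (α × Bool) :=
  l.foldl (greedyStep V) []

namespace GreedyAux

variable {α : Type*} [DecidableEq α] (V : Bool → Bool → α → ℝ)

/-- Difference of the two agents' values. -/
def dD (L : List (α × Bool)) : ℝ := listVal V true L - listVal V false L

/-- Contribution of a single (item, owner) pair to `dD`. -/
def contrib (p : α × Bool) : ℝ := V true p.2 p.1 - V false p.2 p.1

lemma listVal_cons (i : Bool) (q : α × Bool) (L : List (α × Bool)) :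
    listVal V i (q :: L) = V i q.2 q.1 + listVal V i L := by
  simp [listVal]

lemma dD_cons (q : α × Bool) (L : List (α × Bool)) :
    dD V (q :: L) = contrib V q + dD V L := by
  simp [dD, listVal, contrib]; ring

lemma listVal_erase (i : Bool) {p : α × Bool} {L : List (α × Bool)} (hp : p ∈ L) :
    listVal V i L = V i p.2 p.1 + listVal V i (L.erase p) := by
  induction L with
  | nil => cases hp
  | cons q L ih =>
    by_cases h : q = p
    · subst h
      rw [List.erase_cons_head]
      simp [listVal]
    · have hp' : p ∈ L := by
        rcases List.mem_cons.1 hp with h' | h'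
        · exact absurd h'.symm h
        · exact h'
      rw [List.erase_cons_tail (by simpa using h), listVal_cons, listVal_cons, ih hp']
      ring

lemma dD_erase {p : α × Bool} {L : List (α × Bool)} (hp : p ∈ L) :
    dD V L = contrib V p + dD V (L.erase p) := by
  have h1 := listVal_erase V true hp
  have h2 := listVal_erase V false hp
  simp only [dD, contrib]; linarith

/-- The key invariant. -/
def P (L : List (α × Bool)) : Prop :=
  (dD V L < 0 → ∃ p ∈ L, 0 ≤ dD V (L.erase p)) ∧
  (0 < dD V L → ∃ p ∈ L, dD V (L.erase p) ≤ 0)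

lemma P_nil : P V ([] : List (α × Bool)) := by
  constructor <;> intro h <;> simp [dD, listVal] at h

lemma P_cons (q : α × Bool) (L : List (α × Bool)) (hP : P V L)
    (s1 : dD V L ≤ 0 → 0 ≤ contrib V q) (s2 : 0 < dD V L → contrib V q ≤ 0) :
    P V (q :: L) := by
  constructor
  · intro h
    rw [dD_cons] at h
    rcases le_or_gt (dD V L) 0 with hL | hL
    · have hc := s1 hL
      have hL' : dD V L < 0 := by linarith
      obtain ⟨p, hpL, hpe⟩ := hP.1 hL'
      have hd := dD_erase V hpL
      have hcp : contrib V p < 0 := by linarith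
      have hpq : ¬(q == p) = true := by
        simp only [beq_iff_eq]
        rintro rfl; linarith
      refine ⟨p, List.mem_cons_of_mem _ hpL, ?_⟩
      rw [List.erase_cons_tail hpq, dD_cons]
      linarith
    · refine ⟨q, List.mem_cons_self, ?_⟩
      rw [List.erase_cons_head]
      linarith
  · intro h
    rw [dD_cons] at h
    rcases le_or_gt (dD V L) 0 with hL | hL
    · refine ⟨q, List.mem_cons_self, ?_⟩
      rw [List.erase_cons_head]
      linarith
    · have hc := s2 hL
      obtain ⟨p, hpL, hpe⟩ := hP.2 hL
      have hd := dD_erase V hpL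
      have hcp : 0 < contrib V p := by linarith
      have hpq : ¬(q == p) = true := by
        simp only [beq_iff_eq]
        rintro rfl; linarith
      refine ⟨p, List.mem_cons_of_mem _ hpL, ?_⟩
      rw [List.erase_cons_tail hpq, dD_cons]
      linarith

variable (hsym : ∀ a : α, V true true a = V false false a ∧ V true false a = V false true a)

include hsym

lemma contrib_true (a : α) : contrib V (a, true) = V true true a - V true false a := by
  simp [contrib, (hsym a).2]

lemma contrib_false (a : α) : contrib V (a, false) = V true false a - V true true a := by
  simp [contrib, (hsym a).1]

lemma P_greedyStep (L : List (α × Bool)) (a : α) (hP : P V L) :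
    P V (greedyStep V L a) := by
  by_cases h1 : listVal V true L ≤ listVal V false L
  · have hL : dD V L ≤ 0 := by simp only [dD]; linarith
    by_cases h2 : V true false a ≤ V true true a
    · have hstep : greedyStep V L a = (a, true) :: L := by
        simp [greedyStep, h1, h2]
      rw [hstep]
      refine P_cons V _ _ hP (fun _ => ?_) (fun h => absurd h (by linarith))
      rw [contrib_true V hsym]; linarith
    · have hstep : greedyStep V L a = (a, false) :: L := by
        simp [greedyStep, h1, h2]
      rw [hstep]
      refine P_cons V _ _ hP (fun _ => ?_) (fun h => absurd h (by linarith))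
      rw [contrib_false V hsym]; push_neg at h2; linarith
  · have hL : 0 < dD V L := by simp only [dD]; push_neg at h1; linarith
    by_cases h2 : V false false a ≤ V false true a
    · have hstep : greedyStep V L a = (a, true) :: L := by
        simp [greedyStep, h1, h2]
      rw [hstep]
      refine P_cons V _ _ hP (fun h => absurd hL (by linarith)) (fun _ => ?_)
      rw [contrib_true V hsym, (hsym a).1, (hsym a).2]; linarith
    · have hstep : greedyStep V L a = (a, false) :: L := by
        simp [greedyStep, h1, h2]
      rw [hstep]
      refine P_cons V _ _ hP (fun h => absurd hL (by linarith)) (fun _ => ?_)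
      rw [contrib_false V hsym, (hsym a).1, (hsym a).2]; push_neg at h2; linarith

lemma P_foldl : ∀ (l : List α) (L : List (α × Bool)), P V L →
    P V (l.foldl (greedyStep V) L) := by
  intro l
  induction l with
  | nil => intro L h; exact h
  | cons a l ih => intro L h; exact ih _ (P_greedyStep V hsym L a h)

lemma swapVal_true (L : List (α × Bool)) : swapVal V true L = listVal V false L := by
  simp only [swapVal, listVal]
  congr 1
  apply List.map_congr_left
  intro p _
  cases hp : p.2 <;> simp [hp, (hsym p.1).1, (hsym p.1).2]

lemma swapVal_false (L : List (α × Bool)) : swapVal V false L = listVal V true L := by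
  simp only [swapVal, listVal]
  congr 1
  apply List.map_congr_left
  intro p _
  cases hp : p.2 <;> simp [hp, (hsym p.1).1, (hsym p.1).2]

end GreedyAux

/-- For two agents with symmetric additive valuations with externalities,
the greedy procedure that allocates items in decreasing order of
`|V₁(1,a) − V₁(2,a)|`, always giving the current item according to the preference of
the agent with the smaller current total value, produces an allocation in which
at most one agent envies the other, and any envy is eliminated by removing a single
suitable item. -/
theorem greedy_two_agents_symmetric {α : Type*} [DecidableEq α]
    (V : Bool → Bool → α → ℝ)
    (hsym : ∀ a : α, V true true a = V false false a ∧ V true false a = V false true a)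
    (l : List α)
    (hsorted : l.Pairwise fun a b =>
      |V true true b - V true false b| ≤ |V true true a - V true false a|) :
    ¬ (listVal V true (greedy V l) < swapVal V true (greedy V l) ∧
        listVal V false (greedy V l) < swapVal V false (greedy V l)) ∧
      ∀ i : Bool, listVal V i (greedy V l) < swapVal V i (greedy V l) →
        ∃ p ∈ greedy V l,
          swapVal V i ((greedy V l).erase p) ≤ listVal V i ((greedy V l).erase p) := by
  open GreedyAux in
  have hP : P V (greedy V l) := P_foldl V hsym l [] (P_nil V)
  set G := greedy V l with hG
  constructor
  · rintro ⟨h1, h2⟩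
    rw [GreedyAux.swapVal_true V hsym] at h1
    rw [GreedyAux.swapVal_false V hsym] at h2
    linarith
  · intro i hi
    cases i with
    | true =>
      rw [GreedyAux.swapVal_true V hsym] at hi
      have hd : GreedyAux.dD V G < 0 := by simp only [GreedyAux.dD]; linarith
      obtain ⟨p, hp, hpe⟩ := hP.1 hd
      refine ⟨p, hp, ?_⟩
      rw [GreedyAux.swapVal_true V hsym]
      simp only [GreedyAux.dD] at hpe
      linarith
    | false =>
      rw [GreedyAux.swapVal_false V hsym] at hi
      have hd : 0 < GreedyAux.dD V G := by simp only [GreedyAux.dD]; linarith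
      obtain ⟨p, hp, hpe⟩ := hP.2 hd
      refine ⟨p, hp, ?_⟩
      rw [GreedyAux.swapVal_false V hsym]
      simp only [GreedyAux.dD] at hpe
      linarith
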